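/- For A = {1, 2, 3} ⊆ [m] with m ≥ 3, the Vietoris–Rips complex VR(F^m_{⪯A}, 2) is homotopy equivalent to the 3-sphere S³. -/

import Mathlib

open Finset

/-- An abstract simplicial complex on a vertex type `V`: a collection of nonempty
finite subsets of `V` (the faces), closed under taking nonempty subsets. -/
structure AbsSC (V : Type) where
  faces : Set (Finset V)
  not_empty_mem : ∅ ∉ faces
  down_closed : ∀ s ∈ faces, ∀ t : Finset V, t ⊆ s → t ≠ ∅ → t ∈ faces

namespace AbsSC

variable {V W : Type}

/-- The vertex set of a simplicial complex. -/
def vertices (K : AbsSC V) : Set V := {v | ({v} : Finset V) ∈ K.faces}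

/-- The geometric realization of a simplicial complex: the space of convex weightings
supported on a face, topologized as a subspace of `V → ℝ`. -/
def space (K : AbsSC V) : Type :=
  {f : V → ℝ // (∀ v, 0 ≤ f v) ∧ ∃ s ∈ K.faces, (∀ v, f v ≠ 0 → v ∈ s) ∧ ∑ v ∈ s, f v = 1}

instance (K : AbsSC V) : TopologicalSpace K.space := by unfold space; infer_instance

/-- `L` is a subcomplex of `K`. -/
def IsSubcomplex (L K : AbsSC V) : Prop := L.faces ⊆ K.faces

/-- Homotopy equivalence of simplicial complexes (of their geometric realizations). -/
def HEquiv (K : AbsSC V) (L : AbsSC W) : Prop :=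
  Nonempty (ContinuousMap.HomotopyEquiv K.space L.space)

/-- The realization of `K` is homotopy equivalent to the topological space `X`. -/
def HEquivTop (K : AbsSC V) (X : Type) [TopologicalSpace X] : Prop :=
  Nonempty (ContinuousMap.HomotopyEquiv K.space X)

/-- The inclusion of realizations induced by a subcomplex inclusion. -/
def incl {L K : AbsSC V} (h : L.faces ⊆ K.faces) : C(L.space, K.space) where
  toFun f := ⟨f.1, f.2.1, by obtain ⟨s, hs, h1, h2⟩ := f.2.2; exact ⟨s, h hs, h1, h2⟩⟩
  continuous_toFun := Continuous.subtype_mk continuous_subtype_val _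

variable [DecidableEq V]

/-- The link of a vertex. -/
def link (K : AbsSC V) (v : V) : AbsSC V where
  faces := {σ | σ ≠ ∅ ∧ v ∉ σ ∧ σ ∪ {v} ∈ K.faces}
  not_empty_mem h := h.1 rfl
  down_closed := by
    rintro s ⟨hne, hv, hs⟩ t hts htne
    exact ⟨htne, fun hvt => hv (hts hvt),
      K.down_closed _ hs _ (Finset.union_subset_union hts (Finset.Subset.refl _)) (by simp [Finset.union_eq_empty])⟩

lemma link_subset (K : AbsSC V) (v : V) : (K.link v).faces ⊆ K.faces := by
  rintro σ ⟨hne, hv, hσ⟩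
  exact K.down_closed _ hσ _ Finset.subset_union_left hne

/-- The complex induced on the vertices other than `v`. -/
def delete (K : AbsSC V) (v : V) : AbsSC V where
  faces := {σ | σ ∈ K.faces ∧ v ∉ σ}
  not_empty_mem h := K.not_empty_mem h.1
  down_closed := by
    rintro s ⟨hs, hv⟩ t hts htne
    exact ⟨K.down_closed _ hs _ hts htne, fun h => hv (hts h)⟩

/-- The star of a vertex: `st_K(v) = {σ : σ ∪ {v} ∈ K}`. -/
def star (K : AbsSC V) (v : V) : AbsSC V where
  faces := {σ | σ ≠ ∅ ∧ σ ∪ {v} ∈ K.faces}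
  not_empty_mem h := h.1 rfl
  down_closed := by
    rintro s ⟨hne, hs⟩ t hts htne
    exact ⟨htne,
      K.down_closed _ hs _ (Finset.union_subset_union hts (Finset.Subset.refl _)) (by simp [Finset.union_eq_empty])⟩

/-- The star cluster of a subcomplex `L` in `K`: the union of stars of vertices of `L`. -/
def starCluster (K L : AbsSC V) : AbsSC V where
  faces := {σ | σ ≠ ∅ ∧ ∃ v, ({v} : Finset V) ∈ L.faces ∧ σ ∪ {v} ∈ K.faces}
  not_empty_mem h := h.1 rfl
  down_closed := by
    rintro s ⟨hne, v, hvL, hs⟩ t hts htne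
    exact ⟨htne, v, hvL,
      K.down_closed _ hs _ (Finset.union_subset_union hts (Finset.Subset.refl _)) (by simp [Finset.union_eq_empty])⟩

/-- The union of two simplicial complexes. -/
def union (K₁ K₂ : AbsSC V) : AbsSC V where
  faces := K₁.faces ∪ K₂.faces
  not_empty_mem h := by
    rcases h with h | h
    exacts [K₁.not_empty_mem h, K₂.not_empty_mem h]
  down_closed := by
    rintro s (hs | hs) t hts htne
    exacts [Or.inl (K₁.down_closed _ hs _ hts htne), Or.inr (K₂.down_closed _ hs _ hts htne)]

/-- The union of a family of simplicial complexes. -/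
def iUnionC {ι : Type} (F : ι → AbsSC V) : AbsSC V where
  faces := ⋃ i, (F i).faces
  not_empty_mem h := by
    obtain ⟨i, hi⟩ := Set.mem_iUnion.mp h
    exact (F i).not_empty_mem hi
  down_closed := by
    intro s hs t hts htne
    obtain ⟨i, hi⟩ := Set.mem_iUnion.mp hs
    exact Set.mem_iUnion.mpr ⟨i, (F i).down_closed _ hi _ hts htne⟩

/-- The `n`-skeleton of a complex: all faces with at most `n+1` vertices. -/
def skeleton (K : AbsSC V) (n : ℕ) : AbsSC V where
  faces := {σ | σ ∈ K.faces ∧ σ.card ≤ n + 1}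
  not_empty_mem h := K.not_empty_mem h.1
  down_closed := by
    rintro s ⟨hs, hcard⟩ t hts htne
    exact ⟨K.down_closed _ hs _ hts htne, le_trans (Finset.card_le_card hts) hcard⟩

/-- The simplicial complex generated by a single simplex `s` (all its nonempty subsets). -/
def simplexCx (s : Finset V) : AbsSC V where
  faces := {t | t ≠ ∅ ∧ t ⊆ s}
  not_empty_mem h := h.1 rfl
  down_closed := by
    rintro a ⟨hne, has⟩ t hta htne
    exact ⟨htne, hta.trans has⟩

/-- A maximal simplex (facet) of `K`. -/
def IsFacet (K : AbsSC V) (σ : Finset V) : Prop :=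
  σ ∈ K.faces ∧ ∀ τ ∈ K.faces, σ ⊆ τ → τ = σ

/-- `K` is a clique complex: any nonempty set of vertices which pairwise span edges is a face. -/
def IsCliqueCx (K : AbsSC V) : Prop :=
  ∀ σ : Finset V, σ ≠ ∅ → (∀ v ∈ σ, ({v} : Finset V) ∈ K.faces) →
    (∀ v ∈ σ, ∀ w ∈ σ, v ≠ w → ({v, w} : Finset V) ∈ K.faces) → σ ∈ K.faces

/-- `L` is a full subcomplex of `K`. -/
def IsFull (L K : AbsSC V) : Prop :=
  ∀ σ ∈ K.faces, (∀ v ∈ σ, ({v} : Finset V) ∈ L.faces) → σ ∈ L.faces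

end AbsSC

noncomputable section

/-- The `n`-dimensional sphere. -/
abbrev Sph (n : ℕ) : Type := Metric.sphere (0 : EuclideanSpace ℝ (Fin (n + 1))) 1

/-- A base point on the sphere. -/
def sphBase (n : ℕ) : Sph n :=
  ⟨EuclideanSpace.single 0 1, by simp⟩

/-- Relation gluing the base points of `c` copies of a pointed space to an auxiliary point. -/
inductive wedgeRel (c : ℕ) (X : Type) (x₀ : X) : Unit ⊕ Fin c × X → Unit ⊕ Fin c × X → Prop
  | glue (i : Fin c) : wedgeRel c X x₀ (Sum.inl ()) (Sum.inr (i, x₀))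

/-- The wedge sum of `c` copies of the pointed space `(X, x₀)`. -/
def Wedge (c : ℕ) (X : Type) [TopologicalSpace X] (x₀ : X) : Type := Quot (wedgeRel c X x₀)

instance (c : ℕ) (X : Type) [TopologicalSpace X] (x₀ : X) : TopologicalSpace (Wedge c X x₀) := by
  unfold Wedge; infer_instance

/-- The base point of the wedge. -/
def wedgePt (c : ℕ) (X : Type) [TopologicalSpace X] (x₀ : X) : Wedge c X x₀ :=
  Quot.mk _ (Sum.inl ())

/-- The wedge sum of `c` copies of the `n`-sphere. -/
abbrev WedgeSph (n c : ℕ) : Type := Wedge c (Sph n) (sphBase n)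

/-- The base point of a wedge of spheres. -/
def wedgeSphPt (n c : ℕ) : WedgeSph n c := wedgePt c _ _

/-- Relation gluing the two base points in a binary wedge. -/
inductive wedge2Rel (X Y : Type) (x₀ : X) (y₀ : Y) : X ⊕ Y → X ⊕ Y → Prop
  | glue : wedge2Rel X Y x₀ y₀ (Sum.inl x₀) (Sum.inr y₀)

/-- The wedge sum `X ∨ Y` of two pointed spaces. -/
def Wedge2 (X Y : Type) [TopologicalSpace X] [TopologicalSpace Y] (x₀ : X) (y₀ : Y) : Type :=
  Quot (wedge2Rel X Y x₀ y₀)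

instance (X Y : Type) [TopologicalSpace X] [TopologicalSpace Y] (x₀ : X) (y₀ : Y) :
    TopologicalSpace (Wedge2 X Y x₀ y₀) := by unfold Wedge2; infer_instance

/-- Relation collapsing the top and bottom of the cylinder `X × [0,1]` to two cone points. -/
inductive suspRel (X : Type) : X × unitInterval ⊕ Bool → X × unitInterval ⊕ Bool → Prop
  | zero (x : X) : suspRel X (Sum.inl (x, 0)) (Sum.inr false)
  | one (x : X) : suspRel X (Sum.inl (x, 1)) (Sum.inr true)

/-- The (unreduced) suspension `Σ X`. -/
def Susp (X : Type) [TopologicalSpace X] : Type := Quot (suspRel X)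

instance (X : Type) [TopologicalSpace X] : TopologicalSpace (Susp X) := by
  unfold Susp; infer_instance

/-- The north cone point of the suspension. -/
def suspNorth (X : Type) [TopologicalSpace X] : Susp X := Quot.mk _ (Sum.inr true)

end

/-- The Vietoris–Rips complex at scale `r` of a collection `F` of finite subsets of `ℕ`,
with respect to the symmetric difference metric `d(A,B) = |A Δ B|`. -/
def VRc (F : Set (Finset ℕ)) (r : ℕ) : AbsSC (Finset ℕ) where
  faces := {σ | σ.Nonempty ∧ (∀ A ∈ σ, A ∈ F) ∧
    ∀ A ∈ σ, ∀ B ∈ σ, (symmDiff A B).card ≤ r}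
  not_empty_mem h := by simpa using h.1
  down_closed := by
    rintro s ⟨hne, hF, hd⟩ t hts htne
    exact ⟨Finset.nonempty_iff_ne_empty.mpr htne, fun A hA => hF A (hts hA),
      fun A hA B hB => hd A (hts hA) B (hts hB)⟩

/-- `F_n^m`: all `n`-element subsets of `[m] = {1, …, m}`. -/
def Fnm (m n : ℕ) : Set (Finset ℕ) := {A | A ⊆ Finset.Icc 1 m ∧ A.card = n}

/-- `F_{≤ n}^m`: all subsets of `[m]` of cardinality at most `n`. -/
def Fle (m n : ℕ) : Set (Finset ℕ) := {A | A ⊆ Finset.Icc 1 m ∧ A.card ≤ n}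

/-- The simplex `N[C] = {A : C ⊆ A, |A \ C| = 1}` inside `[m]`. -/
def NSimp (m : ℕ) (C : Finset ℕ) : Finset (Finset ℕ) :=
  (Finset.Icc 1 m \ C).image (fun x => insert x C)

/-- The simplex `L[S]`: all subsets of `S` obtained by removing one element. -/
def LSimp (S : Finset ℕ) : Finset (Finset ℕ) := S.image (fun x => S.erase x)

/-- The total order `≺`: first compare cardinalities, then compare the increasing
enumerations lexicographically. -/
def precLT (A B : Finset ℕ) : Prop :=
  A.card < B.card ∨
    (A.card = B.card ∧ List.Lex (· < ·) (A.sort (· ≤ ·)) (B.sort (· ≤ ·)))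

/-- `A ⪯ B`. -/
def precLE (A B : Finset ℕ) : Prop := precLT A B ∨ A = B

/-- `F^m_{≺ A}`: all subsets of `[m]` strictly preceding `A`. -/
def FprecLT (m : ℕ) (A : Finset ℕ) : Set (Finset ℕ) :=
  {B | B ⊆ Finset.Icc 1 m ∧ precLT B A}

/-- `F^m_{⪯ A}`: all subsets of `[m]` preceding (or equal to) `A`. -/
def FprecLE (m : ℕ) (A : Finset ℕ) : Set (Finset ℕ) :=
  {B | B ⊆ Finset.Icc 1 m ∧ precLE B A}

/-- The `j`-th value (0-indexed) of an enumeration `i : Fin n → ℕ`. -/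
def ith {n : ℕ} (i : Fin n → ℕ) (j : ℕ) : ℕ := if h : j < n then i ⟨j, h⟩ else 0

/-- The `ℓ`-th entry (1-indexed) of the enumeration, as an integer, with `i_0 = -1`. -/
def ivZ {n : ℕ} (i : Fin n → ℕ) (ℓ : ℕ) : ℤ := if ℓ = 0 then -1 else (ith i (ℓ - 1) : ℤ)

/-- For `B = i_1 i_2 ⋯ i_n` (increasing), with `d_1 = i_1` and
`d_ℓ = i_ℓ - (i_{ℓ-1} + 1)`, `r_B = Σ_{k=2}^{n-2} C(k,2) + Σ_{ℓ=1}^{n-2} d_ℓ·C(n-ℓ,2)`. -/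
def rA (B : Finset ℕ) : ℕ :=
  (∑ k ∈ Finset.Icc 2 (B.card - 2), Nat.choose k 2) +
    ∑ ℓ ∈ Finset.Icc 1 (B.card - 2),
      ((B.sort (· ≤ ·)).getD (ℓ - 1) 0 -
        (if ℓ = 1 then 0 else (B.sort (· ≤ ·)).getD (ℓ - 2) 0 + 1)) * Nat.choose (B.card - ℓ) 2

/-- For `B = i_1 i_2 ⋯ i_n` (increasing), with `c_1 = i_1 - 1` and
`c_ℓ = i_ℓ - (i_{ℓ-1} + 1)`, `s_B = Σ_{k=2}^{n-2} C(k,2) + Σ_{ℓ=1}^{n-2} c_ℓ·C(n-ℓ,2)`. -/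
def sA (B : Finset ℕ) : ℕ :=
  (∑ k ∈ Finset.Icc 2 (B.card - 2), Nat.choose k 2) +
    ∑ ℓ ∈ Finset.Icc 1 (B.card - 2),
      ((B.sort (· ≤ ·)).getD (ℓ - 1) 0 -
        (if ℓ = 1 then 1 else (B.sort (· ≤ ·)).getD (ℓ - 2) 0 + 1)) * Nat.choose (B.card - ℓ) 2

/-- `t_n = Σ_{A ⊆ [m], |A| = n} r_A`. -/
def tN (m n : ℕ) : ℕ :=
  ∑ A ∈ (Finset.Icc 1 m).powerset.filter (fun A => A.card = n), rA A

/-- `o_{m,n} = Σ { s_A : A ∈ F^m_{n+2}, min A ≥ 2 }`. -/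
def omn (m n : ℕ) : ℕ :=
  ∑ A ∈ (Finset.Icc 1 m).powerset.filter (fun A => A.card = n + 2 ∧ ∀ x ∈ A, 2 ≤ x), sA A

namespace Stmt13

open AbsSC Finset

/-- The eight subsets of `{1,2,3}`. -/
def E8 : Finset (Finset ℕ) := ({1,2,3} : Finset ℕ).powerset

/-- The seven nonempty subsets of `{1,2,3}`. -/
def S7 : Finset (Finset ℕ) := E8.erase ∅

lemma mem_E8 {v : Finset ℕ} : v ∈ E8 ↔ v ⊆ {1,2,3} := Finset.mem_powerset

lemma mem_S7 {v : Finset ℕ} : v ∈ S7 ↔ v ⊆ {1,2,3} ∧ v ≠ ∅ := by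
  simp only [S7, Finset.mem_erase, mem_E8]; tauto

lemma sort123 : (({1,2,3} : Finset ℕ).sort (· ≤ ·)) = [1,2,3] := by
  rw [show ({1,2,3} : Finset ℕ) = [1,2,3].toFinset by decide]
  rw [List.toFinset_sort _ (by decide)]
  decide

lemma lex_absurd (l : List ℕ) (hs : l.Pairwise (· < ·)) (h1 : ∀ x ∈ l, 1 ≤ x)
    (hlen : l.length = 3) (hlex : List.Lex (· < ·) l [1,2,3]) : False := by
  match l, hlen with
  | [a, b, c], _ =>
    have hab : a < b := by simp [List.pairwise_cons] at hs; omega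
    have hbc : b < c := by simp [List.pairwise_cons] at hs; omega
    have ha1 : 1 ≤ a := h1 a (by simp)
    cases hlex with
    | rel h => omega
    | cons h =>
      cases h with
      | rel h => omega
      | cons h =>
        cases h with
        | rel h => omega
        | cons h => cases h

lemma card3_eq {m : ℕ} {B : Finset ℕ} (hB : B ∈ FprecLE m {1,2,3}) :
    B.card ≤ 3 ∧ (B.card = 3 → B = ({1,2,3} : Finset ℕ)) := by
  obtain ⟨hsub, hle⟩ := hB
  have hcard3 : ({1,2,3} : Finset ℕ).card = 3 := by decide
  rcases hle with hlt | rfl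
  · rcases hlt with h | ⟨hc, hlex⟩
    · rw [hcard3] at h; exact ⟨by omega, by omega⟩
    · exfalso
      refine lex_absurd _ (Finset.sortedLT_sort B).pairwise ?_ ?_ ?_
      · intro x hx
        have := hsub (Finset.mem_sort (α := ℕ) (· ≤ ·) |>.mp hx)
        exact (Finset.mem_Icc.mp this).1
      · rw [Finset.length_sort, hc, hcard3]
      · rwa [sort123] at hlex
  · exact ⟨le_of_eq hcard3, fun _ => rfl⟩

lemma card_symmDiff (A B : Finset ℕ) :
    (symmDiff A B).card + 2 * (A ∩ B).card = A.card + B.card := by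
  rw [symmDiff_def]
  have hd : Disjoint (A \ B) (B \ A) := disjoint_sdiff_sdiff
  rw [Finset.sup_eq_union, Finset.card_union_of_disjoint hd]
  have h1 := Finset.card_sdiff_add_card_inter A B
  have h2 := Finset.card_sdiff_add_card_inter B A
  rw [Finset.inter_comm B A] at h2
  omega

lemma antipodal_card (A : Finset ℕ) (hA : A ⊆ ({1,2,3} : Finset ℕ)) :
    (symmDiff A (({1,2,3} : Finset ℕ) \ A)).card = 3 := by
  revert hA
  have : ∀ A ∈ E8, (symmDiff A (({1,2,3} : Finset ℕ) \ A)).card = 3 := by decide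
  intro hA
  exact this A (mem_E8.mpr hA)

lemma nonantipodal_dist {A B : Finset ℕ} (hA : A ⊆ ({1,2,3} : Finset ℕ))
    (hB : B ⊆ ({1,2,3} : Finset ℕ)) (hne : B ≠ ({1,2,3} : Finset ℕ) \ A) :
    (symmDiff A B).card ≤ 2 := by
  revert hne
  have : ∀ A ∈ E8, ∀ B ∈ E8, B ≠ ({1,2,3} : Finset ℕ) \ A → (symmDiff A B).card ≤ 2 := by decide
  exact this A (mem_E8.mpr hA) B (mem_E8.mpr hB)

/-- The octahedral complex: nonempty collections of subsets of `{1,2,3}` with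
no "antipodal" pair. -/
def L : AbsSC (Finset ℕ) where
  faces := {σ | σ.Nonempty ∧ (∀ A ∈ σ, A ⊆ ({1,2,3} : Finset ℕ)) ∧
    ∀ A ∈ σ, ∀ B ∈ σ, B ≠ ({1,2,3} : Finset ℕ) \ A}
  not_empty_mem h := by simpa using h.1
  down_closed := by
    rintro s ⟨hne, hsub, hanti⟩ t hts htne
    exact ⟨Finset.nonempty_iff_ne_empty.mpr htne, fun A hA => hsub A (hts hA),
      fun A hA B hB => hanti A (hts hA) B (hts hB)⟩

lemma mem_F_of_sub {m : ℕ} (hm : 3 ≤ m) {A : Finset ℕ} (hA : A ⊆ ({1,2,3} : Finset ℕ)) :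
    A ∈ FprecLE m {1,2,3} := by
  have hcard3 : ({1,2,3} : Finset ℕ).card = 3 := by decide
  constructor
  · intro x hx
    have := hA hx
    simp only [Finset.mem_insert, Finset.mem_singleton] at this
    rw [Finset.mem_Icc]
    rcases this with rfl | rfl | rfl <;> omega
  · have hle : A.card ≤ 3 := hcard3 ▸ Finset.card_le_card hA
    rcases eq_or_lt_of_le hle with h | h
    · right
      exact Finset.eq_of_subset_of_card_le hA (by omega)
    · left; left; omega

lemma L_sub_K {m : ℕ} (hm : 3 ≤ m) :
    L.faces ⊆ (VRc (FprecLE m {1,2,3}) 2).faces := by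
  rintro σ ⟨hne, hsub, hanti⟩
  refine ⟨hne, fun A hA => mem_F_of_sub hm (hsub A hA), fun A hA B hB => ?_⟩
  exact nonantipodal_dist (hsub A hA) (hsub B hB) (hanti A hA B hB)

section Fold

variable {m : ℕ}

/-- push all weight outside the octahedron onto `∅`. -/
noncomputable def foldFun (f : Finset ℕ → ℝ) : Finset ℕ → ℝ :=
  fun v => if v = ∅ then 1 - ∑ u ∈ S7, f u else if v ∈ S7 then f v else 0

lemma sum_one_of_subset {f : Finset ℕ → ℝ} {s t : Finset (Finset ℕ)}
    (hsupp : ∀ v, f v ≠ 0 → v ∈ s) (hsum : ∑ v ∈ s, f v = 1) (hst : s ⊆ t) :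
    ∑ v ∈ t, f v = 1 := by
  rw [← Finset.sum_subset hst (fun x _ hx => by_contra fun h => hx (hsupp x h))]
  exact hsum

lemma sum_S7_eq {f : Finset ℕ → ℝ} {s : Finset (Finset ℕ)}
    (hsupp : ∀ v, f v ≠ 0 → v ∈ s) :
    ∑ u ∈ S7, f u = ∑ u ∈ s ∩ S7, f u := by
  rw [Finset.sum_subset (Finset.inter_subset_right)]
  intro x hx hnx
  by_contra h
  exact hnx (Finset.mem_inter.mpr ⟨hsupp x h, hx⟩)

lemma F_card_le_two {m : ℕ} {A : Finset ℕ} (hA : A ∈ FprecLE m {1,2,3})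
    (hne : A ≠ ({1,2,3} : Finset ℕ)) : A.card ≤ 2 := by
  obtain ⟨h3, heq⟩ := card3_eq hA
  rcases eq_or_lt_of_le h3 with h | h
  · exact absurd (heq h) hne
  · omega

/-- If `{1,2,3}` belongs to a face of `K`, the whole face lies in `S7`. -/
lemma face_sub_S7 {m : ℕ} {s : Finset (Finset ℕ)}
    (hs : s ∈ (VRc (FprecLE m {1,2,3}) 2).faces) (h123 : ({1,2,3} : Finset ℕ) ∈ s) :
    s ⊆ S7 := by
  obtain ⟨-, hF, hd⟩ := hs
  intro A hA
  rcases eq_or_ne A ({1,2,3} : Finset ℕ) with rfl | hne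
  · rw [mem_S7]; exact ⟨Finset.Subset.refl _, by decide⟩
  · have hdist := hd A hA ({1,2,3} : Finset ℕ) h123
    have hc2 : A.card ≤ 2 := F_card_le_two (hF A hA) hne
    have hkey := card_symmDiff A ({1,2,3} : Finset ℕ)
    have hcard3 : ({1,2,3} : Finset ℕ).card = 3 := by decide
    have hsub : A ⊆ ({1,2,3} : Finset ℕ) := by
      by_contra hnsub
      have hint : (A ∩ ({1,2,3} : Finset ℕ)).card < A.card := by
        apply Finset.card_lt_card
        constructor
        · exact Finset.inter_subset_left
        · intro hAs
          exact hnsub (fun x hx => Finset.mem_inter.mp (hAs hx) |>.2)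
      omega
    rw [mem_S7]
    refine ⟨hsub, ?_⟩
    rintro rfl
    simp only [Finset.empty_inter, Finset.card_empty, Finset.card_empty, symmDiff_comm] at hkey
    omega

lemma empty_mem_F {m : ℕ} (hm : 3 ≤ m) : (∅ : Finset ℕ) ∈ FprecLE m {1,2,3} :=
  mem_F_of_sub hm (Finset.empty_subset _)

lemma dist_empty {m : ℕ} {A : Finset ℕ} (hA : A ∈ FprecLE m {1,2,3})
    (hne : A ≠ ({1,2,3} : Finset ℕ)) : (symmDiff (∅ : Finset ℕ) A).card ≤ 2 := by
  have : symmDiff (∅ : Finset ℕ) A = A := by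
    rw [show (∅ : Finset ℕ) = ⊥ from rfl, bot_symmDiff]
  rw [this]
  exact F_card_le_two hA hne

/-- If `{1,2,3} ∉ s`, then `insert ∅ s` is still a face of `K`. -/
lemma insert_empty_face {s : Finset (Finset ℕ)}
    (hs : s ∈ (VRc (FprecLE m {1,2,3}) 2).faces) (hm : 3 ≤ m)
    (h123 : ({1,2,3} : Finset ℕ) ∉ s) :
    insert ∅ s ∈ (VRc (FprecLE m {1,2,3}) 2).faces := by
  obtain ⟨hne, hF, hd⟩ := hs
  refine ⟨Finset.insert_nonempty _ _, ?_, ?_⟩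
  · intro A hA
    rcases Finset.mem_insert.mp hA with rfl | hA
    · exact empty_mem_F hm
    · exact hF A hA
  · intro A hA B hB
    have hAne : ∀ C ∈ s, C ≠ ({1,2,3} : Finset ℕ) := fun C hC h => h123 (h ▸ hC)
    rcases Finset.mem_insert.mp hA with rfl | hA <;>
      rcases Finset.mem_insert.mp hB with rfl | hB
    · simp
    · exact dist_empty (hF B hB) (hAne B hB)
    · rw [symmDiff_comm]; exact dist_empty (hF A hA) (hAne A hA)
    · exact hd A hA B hB

lemma foldFun_nonneg {f : Finset ℕ → ℝ} (hf : ∀ v, 0 ≤ f v)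
    {s : Finset (Finset ℕ)} (hsupp : ∀ v, f v ≠ 0 → v ∈ s) (hsum : ∑ v ∈ s, f v = 1) :
    ∀ v, 0 ≤ foldFun f v := by
  intro v
  unfold foldFun
  split_ifs with h1 h2
  · rw [sum_S7_eq hsupp]
    have hle : ∑ u ∈ s ∩ S7, f u ≤ ∑ u ∈ s, f u :=
      Finset.sum_le_sum_of_subset_of_nonneg Finset.inter_subset_left (fun i _ _ => hf i)
    rw [hsum] at hle
    linarith
  · exact hf v
  · exact le_refl 0

lemma foldFun_eq_self {f : Finset ℕ → ℝ} {s : Finset (Finset ℕ)}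
    (hsupp : ∀ v, f v ≠ 0 → v ∈ s) (hsum : ∑ v ∈ s, f v = 1) (hsub : s ⊆ S7) :
    foldFun f = f := by
  funext v
  unfold foldFun
  split_ifs with h1 h2
  · subst h1
    have h0 : f ∅ = 0 := by
      by_contra h
      have := hsub (hsupp _ h)
      rw [mem_S7] at this
      exact this.2 rfl
    rw [sum_S7_eq hsupp, Finset.inter_eq_left.mpr hsub, hsum, h0]
    ring
  · rfl
  · symm
    by_contra h
    exact h2 (hsub (hsupp v h))

lemma fold_supp {f : Finset ℕ → ℝ} {s : Finset (Finset ℕ)}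
    (hsupp : ∀ v, f v ≠ 0 → v ∈ s) :
    ∀ v, foldFun f v ≠ 0 → v ∈ insert ∅ (s ∩ S7) := by
  intro v hv
  unfold foldFun at hv
  split_ifs at hv with h1 h2
  · exact h1 ▸ Finset.mem_insert_self _ _
  · exact Finset.mem_insert_of_mem (Finset.mem_inter.mpr ⟨hsupp v hv, h2⟩)
  · exact absurd rfl hv

lemma empty_not_mem_inter_S7 (s : Finset (Finset ℕ)) : (∅ : Finset ℕ) ∉ s ∩ S7 := by
  intro h
  exact ((mem_S7.mp (Finset.mem_inter.mp h).2).2) rfl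

lemma fold_sum {f : Finset ℕ → ℝ} {s : Finset (Finset ℕ)}
    (hsupp : ∀ v, f v ≠ 0 → v ∈ s) (hsum : ∑ v ∈ s, f v = 1) :
    ∑ v ∈ insert ∅ (s ∩ S7), foldFun f v = 1 := by
  rw [Finset.sum_insert (empty_not_mem_inter_S7 s)]
  have h1 : foldFun f ∅ = 1 - ∑ u ∈ S7, f u := by unfold foldFun; rw [if_pos rfl]
  have h2 : ∑ v ∈ s ∩ S7, foldFun f v = ∑ v ∈ s ∩ S7, f v := by
    apply Finset.sum_congr rfl
    intro v hv
    have hv7 := (Finset.mem_inter.mp hv).2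
    unfold foldFun
    rw [if_neg (mem_S7.mp hv7).2, if_pos hv7]
  rw [h1, h2, sum_S7_eq hsupp]
  ring

/-- In case `{1,2,3} ∉ s`, `insert ∅ (s ∩ S7)` is a face of `L`. -/
lemma caseB_face {m : ℕ} {s : Finset (Finset ℕ)}
    (hs : s ∈ (VRc (FprecLE m {1,2,3}) 2).faces) (h123 : ({1,2,3} : Finset ℕ) ∉ s) :
    insert ∅ (s ∩ S7) ∈ L.faces := by
  obtain ⟨hne, hF, hd⟩ := hs
  refine ⟨Finset.insert_nonempty _ _, ?_, ?_⟩
  · intro A hA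
    rcases Finset.mem_insert.mp hA with rfl | hA
    · exact Finset.empty_subset _
    · exact (mem_S7.mp (Finset.mem_inter.mp hA).2).1
  · intro A hA B hB hanti
    rcases Finset.mem_insert.mp hA with rfl | hA <;>
      rcases Finset.mem_insert.mp hB with rfl | hB
    · rw [Finset.sdiff_empty] at hanti
      exact absurd hanti.symm (by decide)
    · rw [Finset.sdiff_empty] at hanti
      exact h123 (hanti ▸ (Finset.mem_inter.mp hB).1)
    · obtain ⟨hAs, hA7⟩ := Finset.mem_inter.mp hA
      have hsub : ({1,2,3} : Finset ℕ) ⊆ A := Finset.sdiff_eq_empty_iff_subset.mp hanti.symm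
      have : A = ({1,2,3} : Finset ℕ) :=
        Finset.Subset.antisymm (mem_S7.mp hA7).1 hsub
      exact h123 (this ▸ hAs)
    · obtain ⟨hAs, hA7⟩ := Finset.mem_inter.mp hA
      obtain ⟨hBs, hB7⟩ := Finset.mem_inter.mp hB
      have h3 := antipodal_card A (mem_S7.mp hA7).1
      have hle := hd A hAs B hBs
      rw [hanti] at hle
      omega

/-- In case `{1,2,3} ∈ s`, the face `s` itself is a face of `L`. -/
lemma caseA_face {m : ℕ} {s : Finset (Finset ℕ)}
    (hs : s ∈ (VRc (FprecLE m {1,2,3}) 2).faces) (h123 : ({1,2,3} : Finset ℕ) ∈ s) :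
    s ∈ L.faces := by
  have hsub := face_sub_S7 hs h123
  obtain ⟨hne, hF, hd⟩ := hs
  refine ⟨hne, fun A hA => (mem_S7.mp (hsub hA)).1, ?_⟩
  intro A hA B hB hanti
  have h3 := antipodal_card A (mem_S7.mp (hsub hA)).1
  have hle := hd A hA B hB
  rw [hanti] at hle
  omega

lemma fold_mem {m : ℕ} (hm : 3 ≤ m) (x : (VRc (FprecLE m {1,2,3}) 2).space) :
    (∀ v, 0 ≤ foldFun x.1 v) ∧ ∃ s ∈ L.faces,
      (∀ v, foldFun x.1 v ≠ 0 → v ∈ s) ∧ ∑ v ∈ s, foldFun x.1 v = 1 := by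
  obtain ⟨hf, s, hs, hsupp, hsum⟩ := x.2
  refine ⟨foldFun_nonneg hf hsupp hsum, ?_⟩
  by_cases h123 : ({1,2,3} : Finset ℕ) ∈ s
  · have heq := foldFun_eq_self hsupp hsum (face_sub_S7 hs h123)
    exact ⟨s, caseA_face hs h123, by rw [heq]; exact hsupp, by rw [heq]; exact hsum⟩
  · exact ⟨insert ∅ (s ∩ S7), caseB_face hs h123, fold_supp hsupp, fold_sum hsupp hsum⟩

lemma foldCont (m : ℕ) (v : Finset ℕ) :
    Continuous (fun x : (VRc (FprecLE m {1,2,3}) 2).space => foldFun x.1 v) := by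
  unfold foldFun
  by_cases h1 : v = ∅
  · simp only [if_pos h1]
    exact continuous_const.sub
      (continuous_finset_sum _ fun u _ => (continuous_apply u).comp continuous_subtype_val)
  · simp only [if_neg h1]
    by_cases h2 : v ∈ S7
    · simp only [if_pos h2]
      exact (continuous_apply v).comp continuous_subtype_val
    · simp only [if_neg h2]
      exact continuous_const

/-- The folding map as a continuous map. -/
noncomputable def foldCM {m : ℕ} (hm : 3 ≤ m) :
    C((VRc (FprecLE m {1,2,3}) 2).space, L.space) where
  toFun x := ⟨foldFun x.1, fold_mem hm x⟩
  continuous_toFun := Continuous.subtype_mk (continuous_pi fun v => foldCont m v) _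

lemma fold_id (y : L.space) : foldFun y.1 = y.1 := by
  obtain ⟨hf, τ, hτ, hsupp, hsum⟩ := y.2
  funext v
  unfold foldFun
  split_ifs with h1 h2
  · subst h1
    have hinter : τ ∩ S7 = τ.erase ∅ := by
      ext u
      simp only [Finset.mem_inter, mem_S7, Finset.mem_erase]
      constructor
      · rintro ⟨hu, _, hne⟩; exact ⟨hne, hu⟩
      · rintro ⟨hne, hu⟩; exact ⟨hu, hτ.2.1 u hu, hne⟩
    rw [sum_S7_eq hsupp, hinter]
    by_cases hin : (∅ : Finset ℕ) ∈ τ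
    · have := Finset.sum_erase_add τ y.1 hin
      rw [hsum] at *
      linarith [Finset.sum_erase_add τ y.1 hin]
    · rw [Finset.erase_eq_of_notMem hin]
      have h0 : y.1 ∅ = 0 := by
        by_contra h
        exact hin (hsupp _ h)
      rw [hsum, h0]
      ring
  · rfl
  · symm
    by_contra h
    have hv := hsupp v h
    have := hτ.2.1 v hv
    exact h2 (mem_S7.mpr ⟨this, h1⟩)

/-- The straight-line homotopy between `incl ∘ fold` and the identity. -/
noncomputable def foldHty {m : ℕ} (hm : 3 ≤ m) :
    ((incl (L_sub_K hm)).comp (foldCM hm)).Homotopy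
      (ContinuousMap.id (VRc (FprecLE m {1,2,3}) 2).space) where
  toFun p := ⟨fun v => (1 - p.1.1) * foldFun p.2.1 v + p.1.1 * p.2.1 v, by
    obtain ⟨t, ht0, ht1⟩ := p.1
    obtain ⟨hf, s, hs, hsupp, hsum⟩ := p.2.2
    have hfoldnn := foldFun_nonneg hf hsupp hsum
    constructor
    · intro v
      exact add_nonneg (mul_nonneg (by linarith) (hfoldnn v)) (mul_nonneg ht0 (hf v))
    · have key : ∀ σ' ∈ (VRc (FprecLE m {1,2,3}) 2).faces,
          (∀ v, foldFun p.2.1 v ≠ 0 → v ∈ σ') → (∀ v, p.2.1 v ≠ 0 → v ∈ σ') →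
          (∑ v ∈ σ', foldFun p.2.1 v = 1) → (∑ v ∈ σ', p.2.1 v = 1) →
          ∃ s' ∈ (VRc (FprecLE m {1,2,3}) 2).faces,
            (∀ v, (1 - t) * foldFun p.2.1 v + t * p.2.1 v ≠ 0 → v ∈ s') ∧
            ∑ v ∈ s', ((1 - t) * foldFun p.2.1 v + t * p.2.1 v) = 1 := by
        intro σ' hσ' hsupp1 hsupp2 hsum1 hsum2
        refine ⟨σ', hσ', ?_, ?_⟩
        · intro v hv
          by_cases hfv : foldFun p.2.1 v ≠ 0
          · exact hsupp1 v hfv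
          · push_neg at hfv
            apply hsupp2
            intro hxv
            rw [hfv, hxv] at hv
            simp at hv
        · rw [Finset.sum_add_distrib, ← Finset.mul_sum, ← Finset.mul_sum, hsum1, hsum2]
          ring
      by_cases h123 : ({1,2,3} : Finset ℕ) ∈ s
      · have heq := foldFun_eq_self hsupp hsum (face_sub_S7 hs h123)
        exact key s hs (by rw [heq]; exact hsupp) hsupp (by rw [heq]; exact hsum) hsum
      · refine key (insert ∅ s) (insert_empty_face hs hm h123) ?_ ?_ ?_ ?_
        · intro v hv
          have := fold_supp hsupp v hv
          rcases Finset.mem_insert.mp this with rfl | hmem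
          · exact Finset.mem_insert_self _ _
          · exact Finset.mem_insert_of_mem (Finset.mem_inter.mp hmem).1
        · exact fun v hv => Finset.mem_insert_of_mem (hsupp v hv)
        · exact sum_one_of_subset (fold_supp hsupp) (fold_sum hsupp hsum)
            (Finset.insert_subset_insert _ Finset.inter_subset_left)
        · exact sum_one_of_subset hsupp hsum (Finset.subset_insert _ _)⟩
  continuous_toFun := by
    apply Continuous.subtype_mk
    apply continuous_pi
    intro v
    have hc1 : Continuous fun p : unitInterval × (VRc (FprecLE m {1,2,3}) 2).space =>
        (p.1 : ℝ) := continuous_subtype_val.comp continuous_fst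
    have hc2 : Continuous fun p : unitInterval × (VRc (FprecLE m {1,2,3}) 2).space =>
        foldFun p.2.1 v := (foldCont m v).comp continuous_snd
    have hc3 : Continuous fun p : unitInterval × (VRc (FprecLE m {1,2,3}) 2).space =>
        p.2.1 v := ((continuous_apply v).comp continuous_subtype_val).comp continuous_snd
    exact ((continuous_const.sub hc1).mul hc2).add (hc1.mul hc3)
  map_zero_left x := by
    apply Subtype.ext
    funext v
    show (1 - ((0 : unitInterval) : ℝ)) * foldFun x.1 v + ((0 : unitInterval) : ℝ) * x.1 v
      = foldFun x.1 v
    norm_num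
  map_one_left x := by
    apply Subtype.ext
    funext v
    show (1 - ((1 : unitInterval) : ℝ)) * foldFun x.1 v + ((1 : unitInterval) : ℝ) * x.1 v
      = x.1 v
    norm_num

/-- The homotopy equivalence between `K` and the octahedral complex `L`. -/
noncomputable def foldEquiv {m : ℕ} (hm : 3 ≤ m) :
    ContinuousMap.HomotopyEquiv (VRc (FprecLE m {1,2,3}) 2).space L.space where
  toFun := foldCM hm
  invFun := incl (L_sub_K hm)
  left_inv := ⟨foldHty hm⟩
  right_inv := by
    rw [show (foldCM hm).comp (incl (L_sub_K hm)) = ContinuousMap.id _ from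
      ContinuousMap.ext fun y => Subtype.ext (fold_id y)]

end Fold

section Octa

/-- The "positive" vertices of the four antipodal pairs. -/
def pv : Fin 4 → Finset ℕ := ![∅, {1}, {2}, {3}]

/-- The "negative" vertices of the four antipodal pairs. -/
def nv : Fin 4 → Finset ℕ := ![{1,2,3}, {2,3}, {1,3}, {1,2}]

lemma pv_mem_E8 : ∀ k : Fin 4, pv k ∈ E8 ∧ nv k ∈ E8 := by decide
lemma nv_eq : ∀ k : Fin 4, nv k = ({1,2,3} : Finset ℕ) \ pv k := by decide
lemma pv_ne_nv : ∀ j k : Fin 4, pv j ≠ nv k := by decide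
lemma pv_inj : ∀ j k : Fin 4, pv j = pv k → j = k := by decide
lemma nv_inj : ∀ j k : Fin 4, nv j = nv k → j = k := by decide
lemma E8_cover : ∀ v ∈ E8, ∃ k : Fin 4, v = pv k ∨ v = nv k := by decide
lemma antipodal_pairs : ∀ A ∈ E8, ∀ B ∈ E8, B = ({1,2,3} : Finset ℕ) \ A →
    ∃ k : Fin 4, (A = pv k ∧ B = nv k) ∨ (A = nv k ∧ B = pv k) := by decide

lemma sum_pairs (g : Finset ℕ → ℝ) :
    ∑ v ∈ E8, g v = ∑ k : Fin 4, (g (pv k) + g (nv k)) := by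
  rw [show E8 = ({∅,{1},{2},{3},{2,3},{1,3},{1,2},{1,2,3}} : Finset (Finset ℕ)) from by decide]
  rw [Fin.sum_univ_four]
  have h0 : pv 0 = ∅ := rfl
  have h1 : pv 1 = {1} := rfl
  have h2 : pv 2 = {2} := rfl
  have h3 : pv 3 = {3} := rfl
  have g0 : nv 0 = {1,2,3} := rfl
  have g1 : nv 1 = {2,3} := rfl
  have g2 : nv 2 = {1,3} := rfl
  have g3 : nv 3 = {1,2} := rfl
  rw [h0, h1, h2, h3, g0, g1, g2, g3]
  rw [Finset.sum_insert (by decide), Finset.sum_insert (by decide),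
    Finset.sum_insert (by decide), Finset.sum_insert (by decide),
    Finset.sum_insert (by decide), Finset.sum_insert (by decide),
    Finset.sum_insert (by decide), Finset.sum_singleton]
  ring

lemma supp_E8 (f : L.space) : ∀ v, f.1 v ≠ 0 → v ∈ E8 := by
  obtain ⟨hf, τ, hτ, hsupp, hsum⟩ := f.2
  intro v hv
  exact mem_E8.mpr (hτ.2.1 v (hsupp v hv))

lemma opp_mul (f : L.space) (k : Fin 4) : f.1 (pv k) * f.1 (nv k) = 0 := by
  obtain ⟨hf, τ, hτ, hsupp, hsum⟩ := f.2
  by_contra h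
  obtain ⟨ha, hb⟩ := mul_ne_zero_iff.mp h
  exact hτ.2.2 (pv k) (hsupp _ ha) (nv k) (hsupp _ hb) (nv_eq k)

lemma sum8 (f : L.space) : ∑ k : Fin 4, (f.1 (pv k) + f.1 (nv k)) = 1 := by
  rw [← sum_pairs]
  obtain ⟨hf, τ, hτ, hsupp, hsum⟩ := f.2
  exact sum_one_of_subset hsupp hsum (fun v hv => mem_E8.mpr (hτ.2.1 v hv))

lemma abs_pair {a b : ℝ} (ha : 0 ≤ a) (hb : 0 ≤ b) (hab : a * b = 0) : |a - b| = a + b := by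
  rcases mul_eq_zero.mp hab with h | h <;> subst h <;> simp [abs_of_nonneg, abs_of_nonpos, ha, hb]

lemma max_abs (a : ℝ) : max a 0 + max (-a) 0 = |a| := by
  rcases le_total 0 a with h | h
  · rw [max_eq_left h, max_eq_right (neg_nonpos_of_nonneg h), add_zero, abs_of_nonneg h]
  · rw [max_eq_right h, max_eq_left (neg_nonneg.mpr h), zero_add, abs_of_nonpos h]

lemma max_sub (a : ℝ) : max a 0 - max (-a) 0 = a := by
  rcases le_total 0 a with h | h
  · rw [max_eq_left h, max_eq_right (neg_nonpos_of_nonneg h), sub_zero]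
  · rw [max_eq_right h, max_eq_left (neg_nonneg.mpr h), zero_sub, neg_neg]

lemma max_scale {a b c : ℝ} (ha : 0 ≤ a) (hb : 0 ≤ b) (hab : a * b = 0) (hc : 0 < c) :
    max (c * (a - b)) 0 = c * a := by
  rcases mul_eq_zero.mp hab with h | h <;> subst h
  · simp only [zero_sub, mul_neg]
    rw [max_eq_right (by nlinarith), mul_zero]
  · simp only [sub_zero]
    rw [max_eq_left (by nlinarith)]

/-- The linear coordinate map to `ℝ⁴`. -/
noncomputable def phi (f : L.space) : EuclideanSpace ℝ (Fin 4) :=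
  (EuclideanSpace.equiv (Fin 4) ℝ).symm (fun k => f.1 (pv k) - f.1 (nv k))

lemma phi_apply (f : L.space) (k : Fin 4) : phi f k = f.1 (pv k) - f.1 (nv k) := rfl

lemma abs_phi (f : L.space) (k : Fin 4) : |phi f k| = f.1 (pv k) + f.1 (nv k) :=
  abs_pair (f.2.1 _) (f.2.1 _) (opp_mul f k)

lemma sum_abs_phi (f : L.space) : ∑ k : Fin 4, |phi f k| = 1 := by
  rw [Finset.sum_congr rfl fun k _ => abs_phi f k]
  exact sum8 f

lemma phi_ne_zero (f : L.space) : phi f ≠ 0 := by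
  intro h
  have : ∑ k : Fin 4, |phi f k| = 0 := by
    rw [Finset.sum_eq_zero]
    intro k _
    rw [show phi f k = 0 by rw [h]; rfl]
    exact abs_zero
  rw [sum_abs_phi f] at this
  norm_num at this

lemma phi_cont : Continuous phi := by
  apply (EuclideanSpace.equiv (Fin 4) ℝ).symm.continuous.comp
  apply continuous_pi
  intro k
  exact ((continuous_apply (pv k)).comp continuous_subtype_val).sub
    ((continuous_apply (nv k)).comp continuous_subtype_val)

/-- The forward map of the homeomorphism. -/
noncomputable def PhiMap (f : L.space) : Sph 3 :=
  ⟨‖phi f‖⁻¹ • phi f, by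
    rw [mem_sphere_zero_iff_norm, norm_smul, norm_inv, norm_norm,
      inv_mul_cancel₀ (norm_ne_zero_iff.mpr (phi_ne_zero f))]⟩

lemma PhiMap_cont : Continuous PhiMap := by
  apply Continuous.subtype_mk
  exact ((phi_cont.norm.inv₀ fun f => norm_ne_zero_iff.mpr (phi_ne_zero f)).smul phi_cont)

lemma coord_cont (k : Fin 4) : Continuous (fun x : EuclideanSpace ℝ (Fin 4) => x k) :=
  (continuous_apply k).comp (EuclideanSpace.equiv (Fin 4) ℝ).continuous

/-- Numerator of the inverse map. -/
noncomputable def gnum (x : EuclideanSpace ℝ (Fin 4)) (v : Finset ℕ) : ℝ :=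
  ∑ k : Fin 4, ((if v = pv k then max (x k) 0 else 0) + (if v = nv k then max (-x k) 0 else 0))

/-- The inverse map, as a bare function. -/
noncomputable def gfun (x : EuclideanSpace ℝ (Fin 4)) (v : Finset ℕ) : ℝ :=
  gnum x v / (∑ k : Fin 4, |x k|)

lemma gnum_nonneg (x : EuclideanSpace ℝ (Fin 4)) (v : Finset ℕ) : 0 ≤ gnum x v := by
  apply Finset.sum_nonneg
  intro k _
  apply add_nonneg <;> split_ifs <;> simp [le_max_right]

lemma gnum_pv (x : EuclideanSpace ℝ (Fin 4)) (j : Fin 4) : gnum x (pv j) = max (x j) 0 := by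
  unfold gnum
  rw [Finset.sum_eq_single_of_mem j (Finset.mem_univ j)]
  · rw [if_pos rfl, if_neg (pv_ne_nv j j), add_zero]
  · intro k _ hk
    rw [if_neg (fun h => hk (pv_inj j k h).symm), if_neg (pv_ne_nv j k), add_zero]

lemma gnum_nv (x : EuclideanSpace ℝ (Fin 4)) (j : Fin 4) : gnum x (nv j) = max (-x j) 0 := by
  unfold gnum
  rw [Finset.sum_eq_single_of_mem j (Finset.mem_univ j)]
  · rw [if_pos rfl, if_neg (fun h => pv_ne_nv j j h.symm), zero_add]
  · intro k _ hk
    rw [if_neg (fun h => pv_ne_nv k j h.symm), if_neg (fun h => hk (nv_inj j k h).symm), add_zero]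

lemma gnum_zero {x : EuclideanSpace ℝ (Fin 4)} {v : Finset ℕ} (hv : v ∉ E8) : gnum x v = 0 := by
  apply Finset.sum_eq_zero
  intro k _
  rw [if_neg (fun h => hv (by rw [h]; exact (pv_mem_E8 k).1)),
    if_neg (fun h => hv (by rw [h]; exact (pv_mem_E8 k).2)), add_zero]

lemma sum_gnum (x : EuclideanSpace ℝ (Fin 4)) : ∑ v ∈ E8, gnum x v = ∑ k : Fin 4, |x k| := by
  rw [sum_pairs (gnum x)]
  apply Finset.sum_congr rfl
  intro k _
  rw [gnum_pv, gnum_nv, max_abs]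

lemma N_pos (x : Sph 3) : 0 < ∑ k : Fin 4, |x.1 k| := by
  have hx : x.1 ≠ 0 := by
    intro h
    have := mem_sphere_zero_iff_norm.mp x.2
    rw [h, norm_zero] at this
    norm_num at this
  have : ∃ k : Fin 4, x.1 k ≠ 0 := by
    by_contra h
    push_neg at h
    exact hx (PiLp.ext h)
  obtain ⟨k, hk⟩ := this
  have h1 : 0 < |x.1 k| := abs_pos.mpr hk
  have h2 : |x.1 k| ≤ ∑ j : Fin 4, |x.1 j| :=
    Finset.single_le_sum (f := fun j => |x.1 j|) (fun j _ => abs_nonneg _) (Finset.mem_univ k)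
  linarith

lemma psi_mem (x : Sph 3) : (∀ v, 0 ≤ gfun x.1 v) ∧ ∃ s ∈ L.faces,
    (∀ v, gfun x.1 v ≠ 0 → v ∈ s) ∧ ∑ v ∈ s, gfun x.1 v = 1 := by
  classical
  have hN := N_pos x
  constructor
  · intro v
    exact div_nonneg (gnum_nonneg _ _) (le_of_lt hN)
  · refine ⟨E8.filter (fun v => gfun x.1 v ≠ 0), ⟨?_, ?_, ?_⟩, ?_, ?_⟩
    · -- nonempty
      have hsum : ∑ v ∈ E8, gfun x.1 v = 1 := by
        unfold gfun
        rw [← Finset.sum_div, sum_gnum, div_self (ne_of_gt hN)]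
      have : ∃ v ∈ E8, gfun x.1 v ≠ 0 := by
        by_contra h
        push_neg at h
        rw [Finset.sum_eq_zero h] at hsum
        norm_num at hsum
      obtain ⟨v, hv, hv0⟩ := this
      exact ⟨v, Finset.mem_filter.mpr ⟨hv, hv0⟩⟩
    · intro A hA
      exact mem_E8.mp (Finset.mem_filter.mp hA).1
    · intro A hA B hB hanti
      obtain ⟨hA8, hA0⟩ := Finset.mem_filter.mp hA
      obtain ⟨hB8, hB0⟩ := Finset.mem_filter.mp hB
      obtain ⟨k, ⟨rfl, rfl⟩ | ⟨rfl, rfl⟩⟩ := antipodal_pairs A hA8 B hB8 hanti <;>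
      · have h1 : gnum x.1 (pv k) ≠ 0 := fun h => by
          simp only [gfun, h, zero_div, ne_eq, not_true_eq_false] at hA0 hB0
        have h2 : gnum x.1 (nv k) ≠ 0 := fun h => by
          simp only [gfun, h, zero_div, ne_eq, not_true_eq_false] at hA0 hB0
        rw [gnum_pv] at h1
        rw [gnum_nv] at h2
        have hp : 0 < x.1 k := by
          rcases le_or_gt (x.1 k) 0 with h | h
          · exact absurd (max_eq_right h) h1
          · exact h
        have hn : x.1 k < 0 := by
          rcases le_or_gt (-x.1 k) 0 with h | h
          · exact absurd (max_eq_right h) h2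
          · linarith
        linarith
    · intro v hv
      refine Finset.mem_filter.mpr ⟨?_, hv⟩
      by_contra h8
      exact hv (by unfold gfun; rw [gnum_zero h8, zero_div])
    · rw [Finset.sum_filter_ne_zero]
      unfold gfun
      rw [← Finset.sum_div, sum_gnum, div_self (ne_of_gt hN)]

/-- The inverse map of the homeomorphism. -/
noncomputable def PsiMap (x : Sph 3) : L.space := ⟨gfun x.1, psi_mem x⟩

lemma PsiMap_cont : Continuous PsiMap := by
  apply Continuous.subtype_mk
  apply continuous_pi
  intro v
  unfold gfun
  apply Continuous.div
  · apply continuous_finset_sum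
    intro k _
    apply Continuous.add
    · by_cases h : v = pv k
      · simp only [if_pos h]
        exact ((coord_cont k).comp continuous_subtype_val).max continuous_const
      · simp only [if_neg h]; exact continuous_const
    · by_cases h : v = nv k
      · simp only [if_pos h]
        exact (((coord_cont k).comp continuous_subtype_val).neg).max continuous_const
      · simp only [if_neg h]; exact continuous_const
  · apply continuous_finset_sum
    intro k _
    exact ((coord_cont k).comp continuous_subtype_val).abs
  · intro x
    exact ne_of_gt (N_pos x)

lemma left_inverse_psi_phi : Function.LeftInverse PsiMap PhiMap := by
  intro f
  apply Subtype.ext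
  funext v
  set c := ‖phi f‖⁻¹ with hc
  have hcpos : 0 < c := by
    rw [hc]
    exact inv_pos.mpr (norm_pos_iff.mpr (phi_ne_zero f))
  have hx : ∀ k : Fin 4, (PhiMap f).1 k = c * (f.1 (pv k) - f.1 (nv k)) := fun k => rfl
  have hN : (∑ k : Fin 4, |(PhiMap f).1 k|) = c := by
    have : ∀ k : Fin 4, |(PhiMap f).1 k| = c * |phi f k| := by
      intro k
      rw [hx k, abs_mul, abs_of_pos hcpos]
      rfl
    rw [Finset.sum_congr rfl fun k _ => this k, ← Finset.mul_sum, sum_abs_phi, mul_one]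
  show gfun (PhiMap f).1 v = f.1 v
  unfold gfun
  rw [hN]
  by_cases hv : v ∈ E8
  · obtain ⟨k, rfl | rfl⟩ := E8_cover v hv
    · rw [gnum_pv, hx k, max_scale (f.2.1 _) (f.2.1 _) (opp_mul f k) hcpos,
        mul_comm, mul_div_assoc, div_self (ne_of_gt hcpos), mul_one]
    · rw [gnum_nv, hx k, ← mul_neg, neg_sub,
        max_scale (f.2.1 _) (f.2.1 _) (by rw [mul_comm]; exact opp_mul f k) hcpos,
        mul_comm, mul_div_assoc, div_self (ne_of_gt hcpos), mul_one]
  · rw [gnum_zero hv, zero_div]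
    symm
    by_contra h
    exact hv (supp_E8 f v h)

lemma right_inverse_psi_phi : Function.RightInverse PsiMap PhiMap := by
  intro x
  apply Subtype.ext
  have hN := N_pos x
  set N := ∑ k : Fin 4, |x.1 k| with hNdef
  have hphi : phi (PsiMap x) = N⁻¹ • x.1 := by
    ext k
    show gfun x.1 (pv k) - gfun x.1 (nv k) = N⁻¹ * x.1 k
    unfold gfun
    rw [gnum_pv, gnum_nv, ← hNdef, div_sub_div_same, max_sub, div_eq_inv_mul]
  show ‖phi (PsiMap x)‖⁻¹ • phi (PsiMap x) = x.1
  rw [hphi, norm_smul, norm_inv, Real.norm_eq_abs, abs_of_pos hN,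
    mem_sphere_zero_iff_norm.mp x.2, mul_one, inv_inv, smul_smul,
    mul_inv_cancel₀ (ne_of_gt hN), one_smul]

/-- The octahedral complex is homeomorphic to the 3-sphere. -/
noncomputable def octaHomeo : L.space ≃ₜ Sph 3 where
  toFun := PhiMap
  invFun := PsiMap
  left_inv := left_inverse_psi_phi
  right_inv := right_inverse_psi_phi
  continuous_toFun := PhiMap_cont
  continuous_invFun := PsiMap_cont

end Octa

end Stmt13

/-- For `A = {1, 2, 3} ⊆ [m]` with `m ≥ 3`, `VR(F^m_{⪯A}, 2) ≃ S³`. -/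
theorem stmt13 (m : ℕ) (hm : 3 ≤ m) :
    AbsSC.HEquivTop (VRc (FprecLE m {1, 2, 3}) 2) (Sph 3) :=
  ⟨(Stmt13.foldEquiv hm).trans Stmt13.octaHomeo.toHomotopyEquiv⟩
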